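/- For λ = (λ₁,…,λ_n) ∈ ℂⁿ with pairwise distinct entries and any l ∈ {1,…,n} and k ∈ {0,…,n-1}, the Vandermonde basis functions satisfy the recursive dynamics v'_{k,λ}(t) = λ_l v_{k,λ}(t) - λ_l v_{k,λ_{¬l}}(t) + v_{k-1,λ_{¬l}}(t), where v_{k,μ} := 0 whenever k < 0 or k ≥ |μ|. -/

import Mathlib

open Finset

noncomputable def acoef {R : Type*} [CommRing R] {n : ℕ} (lam : Fin n → R) (k : ℤ) : R :=
  if 0 ≤ k ∧ k ≤ (n : ℤ) then
    (-1 : R) ^ (n - k.toNat) *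
      ∑ I ∈ Finset.univ.powersetCard (n - k.toNat), ∏ i ∈ I, lam i
  else 0

def removeEntry {α : Type*} {n : ℕ} (lam : Fin n → α) (i : Fin n) : Fin (n - 1) → α :=
  fun j => lam (Fin.cast (Nat.succ_pred_eq_of_pos i.pos)
    ((Fin.cast (Nat.succ_pred_eq_of_pos i.pos).symm i).succAbove j))


noncomputable def vbasisC {n : ℕ} (lam : Fin n → ℂ) (k : ℤ) (t : ℝ) : ℂ :=
  (-1 : ℂ) ^ (n - 1) *
    ∑ i : Fin n, acoef (removeEntry lam i) k /
      (∏ j ∈ Finset.univ.erase i, (lam j - lam i)) * Complex.exp (lam i * t)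

open Polynomial in
private lemma acoef_eq_coeff {m : ℕ} (f : Fin m → ℂ) (k : ℕ) :
    acoef f (k : ℤ) = (∏ j, (X - C (f j))).coeff k := by
  unfold acoef
  by_cases hk : k ≤ m
  · rw [if_pos ⟨Int.ofNat_nonneg k, by exact_mod_cast hk⟩]
    have h1 : (∏ j, (X - C (f j)))
        = (((univ : Finset (Fin m)).val.map f).map (fun t => X - C t)).prod := by
      rw [Multiset.map_map]; rfl
    have hcard : Multiset.card ((univ : Finset (Fin m)).val.map f) = m := by simp
    rw [h1, Multiset.prod_X_sub_C_coeff _ (by rw [hcard]; exact hk), hcard,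
      Finset.esymm_map_val]
    simp
  · rw [if_neg (by push_neg; intro _; exact_mod_cast Nat.lt_of_not_le hk),
      Polynomial.coeff_eq_zero_of_natDegree_lt]
    calc (∏ j, (X - C (f j))).natDegree ≤ ∑ _j : Fin m, 1 := by
          refine le_trans (Polynomial.natDegree_prod_le _ _) ?_
          exact Finset.sum_le_sum fun j _ => le_of_eq (natDegree_X_sub_C _)
      _ < k := by simpa using Nat.lt_of_not_le hk

open Polynomial in
private lemma charP_remove {m : ℕ} (f : Fin m → ℂ) (i : Fin m) :
    (∏ j, (X - C (f j))) = (X - C (f i)) * ∏ j : Fin (m - 1), (X - C (removeEntry f i j)) := by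
  have h : m - 1 + 1 = m := Nat.succ_pred_eq_of_pos i.pos
  have h2 : ∏ j, (X - C (f j)) = ∏ j : Fin (m - 1 + 1), (X - C (f (Fin.cast h j))) :=
    (Fintype.prod_equiv (finCongr h) _ _ fun j => rfl).symm
  rw [h2, Fin.prod_univ_succAbove (fun j : Fin (m - 1 + 1) => (X - C (f (Fin.cast h j))))
    (Fin.cast h.symm i)]
  rfl

/-- Recursive Vandermonde basis dynamics. -/
theorem recursive_vandermonde_basis_dynamics (n : ℕ) (lam : Fin n → ℂ)
    (h : Function.Injective lam) (l : Fin n) (k : ℕ) (hk : k < n) (t : ℝ) :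
    HasDerivAt (fun s : ℝ => vbasisC lam (k : ℤ) s)
      (lam l * vbasisC lam (k : ℤ) t - lam l * vbasisC (removeEntry lam l) (k : ℤ) t +
        vbasisC (removeEntry lam l) ((k : ℤ) - 1) t) t := by
  classical
  set lam' : Fin (n - 1) → ℂ := removeEntry lam l with hlam'
  have h1 : n - 1 + 1 = n := Nat.succ_pred_eq_of_pos l.pos
  set e : Fin (n - 1) → Fin n :=
    fun j => Fin.cast h1 ((Fin.cast h1.symm l).succAbove j) with he_def
  have he : ∀ j, lam' j = lam (e j) := fun j => rfl
  have hinj : Function.Injective e := by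
    intro a b hab
    exact Fin.succAbove_right_injective (Fin.cast_injective h1 hab)
  have hne : ∀ j, e j ≠ l := by
    intro j hj
    exact Fin.succAbove_ne (Fin.cast h1.symm l) j
      (Fin.cast_injective h1 (hj.trans (Fin.ext rfl)))
  have himg : Finset.image e univ = univ.erase l := by
    apply Finset.eq_of_subset_of_card_le
    · intro x hx
      simp only [Finset.mem_image] at hx
      obtain ⟨j, _, rfl⟩ := hx
      exact Finset.mem_erase.mpr ⟨hne j, Finset.mem_univ _⟩
    · rw [Finset.card_erase_of_mem (Finset.mem_univ l),
        Finset.card_image_of_injective _ hinj]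
      simp
  set P : Fin n → ℂ := fun i => ∏ j ∈ univ.erase i, (lam j - lam i) with hP_def
  set P' : Fin (n - 1) → ℂ := fun i => ∏ j ∈ univ.erase i, (lam' j - lam' i) with hP'_def
  have hP : ∀ i' : Fin (n - 1), P (e i') = (lam l - lam (e i')) * P' i' := by
    intro i'
    have hl : l ∈ univ.erase (e i') :=
      Finset.mem_erase.mpr ⟨fun hh => hne i' hh.symm, Finset.mem_univ _⟩
    rw [hP_def]
    simp only
    rw [← Finset.mul_prod_erase _ _ hl]
    congr 1
    have hset : (univ.erase (e i')).erase l = Finset.image e (univ.erase i') := by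
      rw [Finset.image_erase hinj, himg, Finset.erase_right_comm]
    rw [hset, Finset.prod_image (fun a _ b _ hab => hinj hab), hP'_def]
    exact Finset.prod_congr rfl fun j _ => by rw [he, he]
  set c : Fin n → ℂ := fun i => acoef (removeEntry lam i) (k : ℤ) / P i with hc_def
  set c' : Fin (n - 1) → ℤ → ℂ :=
    fun i j => acoef (removeEntry lam' i) j / P' i with hc'_def
  set E : Fin n → ℂ := fun i => Complex.exp (lam i * (t : ℂ)) with hE_def
  -- coefficient recurrence
  have hA : ∀ i' : Fin (n - 1),
      acoef (removeEntry lam (e i')) (k : ℤ)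
        = acoef (removeEntry lam' i') ((k : ℤ) - 1)
          - lam l * acoef (removeEntry lam' i') (k : ℤ) := by
    intro i'
    set Q : Polynomial ℂ :=
      ∏ j : Fin (n - 1 - 1), (Polynomial.X - Polynomial.C (removeEntry lam' i' j)) with hQ
    have hR : (∏ j : Fin (n - 1),
        (Polynomial.X - Polynomial.C (removeEntry lam (e i') j)))
        = (Polynomial.X - Polynomial.C (lam l)) * Q := by
      apply mul_left_cancel₀ (Polynomial.X_sub_C_ne_zero (lam (e i')))
      rw [← charP_remove lam (e i'), charP_remove lam l, charP_remove lam' i', ← he]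
      ring
    cases k with
    | zero =>
      have hneg : acoef (removeEntry lam' i') ((0 : ℕ) - 1 : ℤ) = 0 := by
        rw [acoef]
        norm_num
      rw [acoef_eq_coeff, hR, Polynomial.mul_coeff_zero, hneg, acoef_eq_coeff]
      simp [sub_mul, hQ]
    | succ s =>
      have h2 : ((s + 1 : ℕ) : ℤ) - 1 = ((s : ℕ) : ℤ) := by push_cast; ring
      rw [acoef_eq_coeff, hR, mul_comm, Polynomial.coeff_mul_X_sub_C, h2,
        acoef_eq_coeff, acoef_eq_coeff, hQ]
      ring
  -- key algebraic identity
  have key : (-1 : ℂ) ^ (n - 1) * ∑ i, c i * (lam i * E i)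
      - lam l * ((-1 : ℂ) ^ (n - 1) * ∑ i, c i * E i)
      = (-1 : ℂ) ^ (n - 1 - 1) * ∑ i', c' i' ((k : ℤ) - 1) * E (e i')
        - lam l * ((-1 : ℂ) ^ (n - 1 - 1) * ∑ i', c' i' (k : ℤ) * E (e i')) := by
    have lhs_eq : (-1 : ℂ) ^ (n - 1) * ∑ i, c i * (lam i * E i)
        - lam l * ((-1 : ℂ) ^ (n - 1) * ∑ i, c i * E i)
        = ∑ i, (-1 : ℂ) ^ (n - 1) * (c i * ((lam i - lam l) * E i)) := by
      rw [Finset.mul_sum, Finset.mul_sum, Finset.mul_sum, ← Finset.sum_sub_distrib]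
      exact Finset.sum_congr rfl fun i _ => by ring
    have rhs_eq : (-1 : ℂ) ^ (n - 1 - 1) * ∑ i', c' i' ((k : ℤ) - 1) * E (e i')
        - lam l * ((-1 : ℂ) ^ (n - 1 - 1) * ∑ i', c' i' (k : ℤ) * E (e i'))
        = ∑ i', (-1 : ℂ) ^ (n - 1 - 1)
            * ((c' i' ((k : ℤ) - 1) - lam l * c' i' (k : ℤ)) * E (e i')) := by
      rw [Finset.mul_sum, Finset.mul_sum, Finset.mul_sum, ← Finset.sum_sub_distrib]
      exact Finset.sum_congr rfl fun i _ => by ring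
    rw [lhs_eq, rhs_eq]
    rw [← Finset.sum_erase (univ : Finset (Fin n))
      (f := fun i => (-1 : ℂ) ^ (n - 1) * (c i * ((lam i - lam l) * E i)))
      (a := l) (by simp), ← himg, Finset.sum_image (fun a _ b _ hab => hinj hab)]
    refine Finset.sum_congr rfl fun i' _ => ?_
    have hn2 : n - 1 - 1 + 1 = n - 1 := Nat.succ_pred_eq_of_pos i'.pos
    have hsgn : (-1 : ℂ) ^ (n - 1) = -(-1 : ℂ) ^ (n - 1 - 1) := by
      conv_lhs => rw [← hn2]
      rw [pow_succ, mul_neg_one]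
    have hd : lam l - lam (e i') ≠ 0 :=
      sub_ne_zero.mpr fun hll => hne i' (h hll).symm
    have hcc : c (e i') * (lam l - lam (e i'))
        = c' i' ((k : ℤ) - 1) - lam l * c' i' (k : ℤ) := by
      rw [hc_def, hc'_def]
      simp only
      rw [hP i', hA i', div_mul_eq_mul_div,
        mul_comm (acoef (removeEntry lam' i') ((k : ℤ) - 1)
          - lam l * acoef (removeEntry lam' i') (k : ℤ)) (lam l - lam (e i')),
        mul_div_mul_left _ _ hd, sub_div, mul_div_assoc]
    rw [hsgn]
    calc -(-1 : ℂ) ^ (n - 1 - 1) * (c (e i') * ((lam (e i') - lam l) * E (e i')))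
        = (-1 : ℂ) ^ (n - 1 - 1) * ((c (e i') * (lam l - lam (e i'))) * E (e i')) := by ring
      _ = (-1 : ℂ) ^ (n - 1 - 1)
          * ((c' i' ((k : ℤ) - 1) - lam l * c' i' (k : ℤ)) * E (e i')) := by rw [hcc]
  -- the derivative
  have H : HasDerivAt (fun s : ℝ => vbasisC lam (k : ℤ) s)
      ((-1 : ℂ) ^ (n - 1) * ∑ i, c i * (lam i * E i)) t := by
    unfold vbasisC
    apply HasDerivAt.const_mul
    apply HasDerivAt.fun_sum
    intro i _
    have hexp : HasDerivAt (fun s : ℝ => Complex.exp (lam i * (s : ℂ)))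
        (lam i * Complex.exp (lam i * (t : ℂ))) t := by
      have hz : HasDerivAt (fun z : ℂ => Complex.exp (lam i * z))
          (lam i * Complex.exp (lam i * (t : ℂ))) (t : ℂ) := by
        simpa [mul_comm] using ((hasDerivAt_id (t : ℂ)).const_mul (lam i)).cexp
      exact hz.comp_ofReal
    exact hexp.const_mul (c i)
  convert H using 1
  have hv : vbasisC lam (k : ℤ) t = (-1 : ℂ) ^ (n - 1) * ∑ i, c i * E i := rfl
  have hv' : vbasisC lam' (k : ℤ) t
      = (-1 : ℂ) ^ (n - 1 - 1) * ∑ i', c' i' (k : ℤ) * E (e i') := rfl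
  have hv'' : vbasisC lam' ((k : ℤ) - 1) t
      = (-1 : ℂ) ^ (n - 1 - 1) * ∑ i', c' i' ((k : ℤ) - 1) * E (e i') := rfl
  rw [hv, hv', hv'']
  linear_combination -key
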